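/- For any index i with 1 ≤ i ≤ n-2 and scalars z_1, z_2, z_3, the braid matrices satisfy the hexavalent (braid-move) identity B_i(z_3) · B_{i+1}(z_2) · B_i(z_1) = B_{i+1}(z_1) · B_i(z_2 − z_1·z_3) · B_{i+1}(z_3). -/
import Mathlib


open Matrix

def permP (n : ℕ) (R : Type*) [CommRing R] (i : ℕ) : Matrix (Fin n) (Fin n) R :=
  Matrix.of fun k l =>
    if (k : ℕ) = i ∧ (l : ℕ) = i + 1 then 1
    else if (k : ℕ) = i + 1 ∧ (l : ℕ) = i then 1
    else if (k : ℕ) = i ∧ (l : ℕ) = i then 0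
    else if (k : ℕ) = i + 1 ∧ (l : ℕ) = i + 1 then 0
    else if k = l then 1 else 0

def transS (n : ℕ) (R : Type*) [CommRing R] (i j : ℕ) (z : R) :
    Matrix (Fin n) (Fin n) R :=
  Matrix.of fun k l =>
    (if k = l then 1 else 0) + (if (k : ℕ) = i ∧ (l : ℕ) = j then z else 0)

def braidB (n : ℕ) (R : Type*) [CommRing R] (i : ℕ) (z : R) :
    Matrix (Fin n) (Fin n) R :=
  Matrix.of fun k l =>
    if (k : ℕ) = i ∧ (l : ℕ) = i then 0
    else if (k : ℕ) = i ∧ (l : ℕ) = i + 1 then 1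
    else if (k : ℕ) = i + 1 ∧ (l : ℕ) = i then 1
    else if (k : ℕ) = i + 1 ∧ (l : ℕ) = i + 1 then z
    else if k = l then 1 else 0

def diagD (n : ℕ) (R : Type*) [CommRing R] (i : ℕ) (t : R) :
    Matrix (Fin n) (Fin n) R :=
  Matrix.diagonal fun m => if (m : ℕ) = i then t else 1

def chiM (n : ℕ) (R : Type*) [CommRing R] (i k : ℕ) (a b : R) :
    Matrix (Fin n) (Fin n) R :=
  Matrix.diagonal fun m => if (m : ℕ) = i then a else if (m : ℕ) = k then b else 1

lemma braid_mul_apply {n : ℕ} {R : Type*} [CommRing R] {i : ℕ} (h : i + 1 < n) (z : R)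
    (M : Matrix (Fin n) (Fin n) R) (k l : Fin n) :
    (braidB n R i z * M) k l =
      if (k : ℕ) = i then M ⟨i+1, h⟩ l
      else if (k : ℕ) = i + 1 then M ⟨i, Nat.lt_of_succ_lt h⟩ l + z * M ⟨i+1, h⟩ l
      else M k l := by
  have hB : ∀ m : Fin n, braidB n R i z k m =
      (if (k:ℕ) = i then (if m = ⟨i+1,h⟩ then (1:R) else 0)
       else if (k:ℕ) = i+1 then
         (if m = ⟨i, Nat.lt_of_succ_lt h⟩ then (1:R) else 0) + (if m = ⟨i+1,h⟩ then z else 0)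
       else (if k = m then 1 else 0)) := by
    intro m
    simp only [braidB, Matrix.of_apply, Fin.ext_iff]
    split_ifs <;> simp_all
  rw [Matrix.mul_apply]
  simp only [hB]
  split_ifs with h1 h2 <;>
    simp [mul_add, mul_ite, ite_mul, Finset.sum_add_distrib, Finset.sum_ite_eq,
      Finset.sum_ite_eq', mul_comm]

set_option maxHeartbeats 2000000 in
/-- Hexavalent (braid-move) identity for braid matrices:
`B_i(z₃) B_{i+1}(z₂) B_i(z₁) = B_{i+1}(z₁) B_i(z₂ - z₁z₃) B_{i+1}(z₃)`. -/
theorem braid_matrices_hexavalent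
    (n : ℕ) (R : Type*) [CommRing R] (i : ℕ) (hi : i + 2 < n)
    (z₁ z₂ z₃ : R) :
    braidB n R i z₃ * braidB n R (i + 1) z₂ * braidB n R i z₁ =
      braidB n R (i + 1) z₁ * braidB n R i (z₂ - z₁ * z₃) *
        braidB n R (i + 1) z₃ := by
  have h1 : i + 1 < n := by omega
  have h2 : i + 1 + 1 < n := by omega
  have e1 : i + 1 ≠ i := by omega
  have e2 : i ≠ i + 1 := by omega
  have e3 : i + 1 + 1 ≠ i := by omega
  have e4 : i ≠ i + 1 + 1 := by omega
  have e5 : i + 1 + 1 ≠ i + 1 := by omega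
  have e6 : i + 1 ≠ i + 1 + 1 := by omega
  ext k l
  rw [Matrix.mul_assoc, Matrix.mul_assoc]
  by_cases hk0 : (k:ℕ) = i <;> by_cases hk1 : (k:ℕ) = i + 1 <;>
    simp only [braid_mul_apply h1, braid_mul_apply h2, hk0, hk1,
      e1, e2, e3, e4, e5, e6, if_true, if_false, ite_true, ite_false,
      not_false_eq_true, ne_eq] <;>
  by_cases hl0 : (l:ℕ) = i <;> by_cases hl1 : (l:ℕ) = i + 1 <;>
    by_cases hl2 : (l:ℕ) = i + 1 + 1 <;>
    simp [braidB, hl0, hl1, hl2, hk0, hk1, e1, e2, e3, e4, e5, e6, Fin.ext_iff] <;>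
    first | rfl | ring1 | omega | (split_ifs <;> first | rfl | ring1 | omega)
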